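/- For every finite multiset Γ of ecumenical formulas and every eventually externally classical formula A^ec, the formula (⋀Γ) →c A^ec is provable in the ecumenical sequent calculus LE if and only if (⋀Γ) →i A^ec is provable in LE, where ⋀Γ denotes the conjunction of the formulas in Γ. -/

import Mathlib

namespace Ecumenical

/-! First-order ecumenical language (locally nameless: de Bruijn bound vars,
    named free vars) and the ecumenical sequent calculus LE. -/

inductive Tm where
  | bvar : Nat → Tm
  | fvar : Nat → Tm

/-- Replace the bound variable of index `k` by the free variable `y`. -/
def Tm.openT (k y : Nat) : Tm → Tm
  | .bvar n => if n = k then .fvar y else .bvar n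
  | .fvar n => .fvar n

def Tm.fv : Tm → Finset Nat
  | .bvar _ => ∅
  | .fvar n => {n}

/-- Ecumenical first-order formulas. `ati`/`atc` are intuitionistic/classical
    atomic predicates; quantifiers bind the de Bruijn index 0. -/
inductive Fm where
  | ati : Nat → List Tm → Fm
  | atc : Nat → List Tm → Fm
  | bot : Fm
  | neg : Fm → Fm
  | and : Fm → Fm → Fm
  | ori : Fm → Fm → Fm
  | orc : Fm → Fm → Fm
  | impi : Fm → Fm → Fm
  | impc : Fm → Fm → Fm
  | all : Fm → Fm
  | exi : Fm → Fm
  | exc : Fm → Fm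

def Fm.openF (k y : Nat) : Fm → Fm
  | .ati p ts => .ati p (ts.map (Tm.openT k y))
  | .atc p ts => .atc p (ts.map (Tm.openT k y))
  | .bot => .bot
  | .neg A => .neg (A.openF k y)
  | .and A B => .and (A.openF k y) (B.openF k y)
  | .ori A B => .ori (A.openF k y) (B.openF k y)
  | .orc A B => .orc (A.openF k y) (B.openF k y)
  | .impi A B => .impi (A.openF k y) (B.openF k y)
  | .impc A B => .impc (A.openF k y) (B.openF k y)
  | .all A => .all (A.openF (k+1) y)
  | .exi A => .exi (A.openF (k+1) y)
  | .exc A => .exc (A.openF (k+1) y)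

/-- `A.inst y` is `A[y/x]`: the body of a quantifier instantiated with `y`. -/
def Fm.inst (A : Fm) (y : Nat) : Fm := A.openF 0 y

def Fm.fv : Fm → Finset Nat
  | .ati _ ts => ts.foldr (fun t s => t.fv ∪ s) ∅
  | .atc _ ts => ts.foldr (fun t s => t.fv ∪ s) ∅
  | .bot => ∅
  | .neg A => A.fv
  | .and A B => A.fv ∪ B.fv
  | .ori A B => A.fv ∪ B.fv
  | .orc A B => A.fv ∪ B.fv
  | .impi A B => A.fv ∪ B.fv
  | .impc A B => A.fv ∪ B.fv
  | .all A => A.fv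
  | .exi A => A.fv
  | .exc A => A.fv

/-- `y` is fresh for every formula in the context `Γ`. -/
def FreshIn (y : Nat) (Γ : Multiset Fm) : Prop := ∀ B ∈ Γ, y ∉ B.fv

/-- Intuitionistic bi-implication `A ↔i B`. -/
def Fm.iffi (A B : Fm) : Fm := .and (.impi A B) (.impi B A)

/-- The ecumenical sequent calculus LE, with single-succedent sequents `Γ ⊢ C`. -/
inductive LE : Multiset Fm → Fm → Prop where
  | init (p ts Γ) : LE (Fm.ati p ts ::ₘ Γ) (Fm.ati p ts)
  | botL (Γ A) : LE (Fm.bot ::ₘ Γ) A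
  | cut {Γ A C} : LE Γ A → LE (A ::ₘ Γ) C → LE Γ C
  | wk {Γ} (A) : LE Γ Fm.bot → LE Γ A
  | andL {Γ A B C} : LE (A ::ₘ B ::ₘ Γ) C → LE (Fm.and A B ::ₘ Γ) C
  | andR {Γ A B} : LE Γ A → LE Γ B → LE Γ (Fm.and A B)
  | oriL {Γ A B C} : LE (A ::ₘ Γ) C → LE (B ::ₘ Γ) C → LE (Fm.ori A B ::ₘ Γ) C
  | oriR1 {Γ A} (B) : LE Γ A → LE Γ (Fm.ori A B)
  | oriR2 {Γ B} (A) : LE Γ B → LE Γ (Fm.ori A B)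
  | impiL {Γ A B C} : LE (Fm.impi A B ::ₘ Γ) A → LE (B ::ₘ Γ) C →
      LE (Fm.impi A B ::ₘ Γ) C
  | impiR {Γ A B} : LE (A ::ₘ Γ) B → LE Γ (Fm.impi A B)
  | negL {Γ A} : LE (Fm.neg A ::ₘ Γ) A → LE (Fm.neg A ::ₘ Γ) Fm.bot
  | negR {Γ A} : LE (A ::ₘ Γ) Fm.bot → LE Γ (Fm.neg A)
  | allL {Γ A C} (y) : LE (A.inst y ::ₘ Fm.all A ::ₘ Γ) C → LE (Fm.all A ::ₘ Γ) C
  | allR {Γ A} (y) : y ∉ A.fv → FreshIn y Γ → LE Γ (A.inst y) → LE Γ (Fm.all A)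
  | exiL {Γ A C} (y) : y ∉ A.fv → FreshIn y Γ → y ∉ C.fv →
      LE (A.inst y ::ₘ Γ) C → LE (Fm.exi A ::ₘ Γ) C
  | exiR {Γ A} (y) : LE Γ (A.inst y) → LE Γ (Fm.exi A)
  | orcR {Γ A B} : LE (Fm.neg A ::ₘ Fm.neg B ::ₘ Γ) Fm.bot → LE Γ (Fm.orc A B)
  | impcR {Γ A B} : LE (A ::ₘ Fm.neg B ::ₘ Γ) Fm.bot → LE Γ (Fm.impc A B)
  | excR {Γ A} : LE (Fm.all (Fm.neg A) ::ₘ Γ) Fm.bot → LE Γ (Fm.exc A)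
  | Rc {Γ p ts} : LE (Fm.neg (Fm.ati p ts) ::ₘ Γ) Fm.bot → LE Γ (Fm.atc p ts)
  | orcL {Γ A B} : LE (A ::ₘ Γ) Fm.bot → LE (B ::ₘ Γ) Fm.bot →
      LE (Fm.orc A B ::ₘ Γ) Fm.bot
  | impcL {Γ A B} : LE (Fm.impc A B ::ₘ Γ) A → LE (B ::ₘ Γ) Fm.bot →
      LE (Fm.impc A B ::ₘ Γ) Fm.bot
  | excL {Γ A} (y) : y ∉ A.fv → FreshIn y Γ →
      LE (A.inst y ::ₘ Γ) Fm.bot → LE (Fm.exc A ::ₘ Γ) Fm.bot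
  | Lc {Γ p ts} : LE (Fm.ati p ts ::ₘ Γ) Fm.bot → LE (Fm.atc p ts ::ₘ Γ) Fm.bot


/-- Externally classical formulas: `A^c ::= p_c | ⊥ | A ∨c A | A →c A | ∃c x.A`. -/
inductive IsEC : Fm → Prop where
  | atc (p ts) : IsEC (.atc p ts)
  | bot : IsEC .bot
  | orc (A B) : IsEC (.orc A B)
  | impc (A B) : IsEC (.impc A B)
  | exc (A) : IsEC (.exc A)

/-- Eventually externally classical formulas:
    `A^ec ::= A^c | A^ec ∧ A^ec | ∀x.A^ec | A →i A^ec | ¬A`. -/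
inductive IsEEC : Fm → Prop where
  | ec {A} : IsEC A → IsEEC A
  | and {A B} : IsEEC A → IsEEC B → IsEEC (.and A B)
  | all {A} : IsEEC A → IsEEC (.all A)
  | impi {B} (A) : IsEEC B → IsEEC (.impi A B)
  | neg (A) : IsEEC (.neg A)

/-- The conjunction `⋀Γ` of a finite (listed) multiset of formulas;
    the empty conjunction is the trivially provable `⊥ →i ⊥`. -/
def conj : List Fm → Fm
  | [] => Fm.impi .bot .bot
  | [A] => A
  | A :: l => Fm.and A (conj l)

/-! ### Name swapping (equivariance infrastructure) -/

def swapN (y z a : Nat) : Nat := if a = y then z else if a = z then y else a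

@[simp] lemma swapN_invol (y z a : Nat) : swapN y z (swapN y z a) = a := by
  unfold swapN; split_ifs <;> omega

lemma swapN_id {y z a : Nat} (hy : a ≠ y) (hz : a ≠ z) : swapN y z a = a := by
  unfold swapN; split_ifs <;> omega

def Tm.swap (y z : Nat) : Tm → Tm
  | .bvar n => .bvar n
  | .fvar n => .fvar (swapN y z n)

def Fm.swap (y z : Nat) : Fm → Fm
  | .ati p ts => .ati p (ts.map (Tm.swap y z))
  | .atc p ts => .atc p (ts.map (Tm.swap y z))
  | .bot => .bot
  | .neg A => .neg (A.swap y z)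
  | .and A B => .and (A.swap y z) (B.swap y z)
  | .ori A B => .ori (A.swap y z) (B.swap y z)
  | .orc A B => .orc (A.swap y z) (B.swap y z)
  | .impi A B => .impi (A.swap y z) (B.swap y z)
  | .impc A B => .impc (A.swap y z) (B.swap y z)
  | .all A => .all (A.swap y z)
  | .exi A => .exi (A.swap y z)
  | .exc A => .exc (A.swap y z)

lemma Tm.swap_openT (y z k w : Nat) (t : Tm) :
    (t.openT k w).swap y z = (t.swap y z).openT k (swapN y z w) := by
  cases t with
  | bvar n => simp only [Tm.openT, Tm.swap]; split_ifs <;> simp [Tm.openT, Tm.swap, *]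
  | fvar n => simp [Tm.openT, Tm.swap]

lemma Fm.swap_openF (y z : Nat) (A : Fm) : ∀ k w,
    (A.openF k w).swap y z = (A.swap y z).openF k (swapN y z w) := by
  induction A <;> intro k w <;>
    simp [Fm.openF, Fm.swap, Tm.swap_openT, List.map_map, Function.comp, *]

lemma Fm.swap_inst (y z w : Nat) (A : Fm) :
    (A.inst w).swap y z = (A.swap y z).inst (swapN y z w) :=
  Fm.swap_openF y z A 0 w

lemma Tm.fv_swap (y z : Nat) (t : Tm) : (t.swap y z).fv = t.fv.image (swapN y z) := by
  cases t <;> simp [Tm.swap, Tm.fv]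

lemma Fm.fv_swap (y z : Nat) (A : Fm) : (A.swap y z).fv = A.fv.image (swapN y z) := by
  induction A <;>
    simp [Fm.swap, Fm.fv, Finset.image_union, *]
  case ati p ts =>
    induction ts with
    | nil => simp
    | cons t ts ih => simp [Tm.fv_swap, Finset.image_union, ih]
  case atc p ts =>
    induction ts with
    | nil => simp
    | cons t ts ih => simp [Tm.fv_swap, Finset.image_union, ih]

lemma mem_image_swapN {y z a : Nat} {s : Finset Nat} :
    swapN y z a ∈ s.image (swapN y z) ↔ a ∈ s := by
  constructor
  · rintro h
    obtain ⟨b, hb, he⟩ := Finset.mem_image.1 h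
    have : b = a := by
      have := congrArg (swapN y z) he; simpa using this
    rwa [this] at hb
  · intro h; exact Finset.mem_image_of_mem _ h

lemma notmem_fv_swap {y z a : Nat} {A : Fm} (h : a ∉ A.fv) :
    swapN y z a ∉ (A.swap y z).fv := by
  rw [Fm.fv_swap]; exact fun hc => h (mem_image_swapN.1 hc)

lemma Tm.swap_invol (y z : Nat) (t : Tm) : (t.swap y z).swap y z = t := by
  cases t <;> simp [Tm.swap]

lemma Fm.swap_invol (y z : Nat) (A : Fm) : (A.swap y z).swap y z = A := by
  induction A <;>
    simp [Fm.swap, List.map_map, Function.comp_def, Tm.swap_invol, *]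

lemma Tm.swap_fresh {y z : Nat} {t : Tm} (hy : y ∉ t.fv) (hz : z ∉ t.fv) :
    t.swap y z = t := by
  cases t with
  | bvar n => rfl
  | fvar n =>
    simp [Tm.fv] at hy hz
    simp [Tm.swap, swapN_id (Ne.symm hy) (Ne.symm hz)]

lemma fv_foldr_mem {a : Nat} {ts : List Tm} :
    a ∈ (ts.foldr (fun t s => t.fv ∪ s) ∅) ↔ ∃ t ∈ ts, a ∈ t.fv := by
  induction ts with
  | nil => simp
  | cons t ts ih => simp [ih]

lemma Tm.swap_fresh' {y z : Nat} {t : Tm} (hy : y ∉ t.fv) (hz : z ∉ t.fv) :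
    t.swap y z = t := Tm.swap_fresh hy hz

lemma Fm.swap_fresh {y z : Nat} {A : Fm} (hy : y ∉ A.fv) (hz : z ∉ A.fv) :
    A.swap y z = A := by
  induction A <;> simp [Fm.fv, fv_foldr_mem] at hy hz <;>
    simp (config := { failIfUnchanged := false }) [Fm.swap, *]
  all_goals
    rename_i hy hz
    rename_i ts
    calc List.map (Tm.swap y z) ts
        = List.map id ts := List.map_congr_left (fun t ht => Tm.swap_fresh (hy t ht) (hz t ht))
      _ = ts := List.map_id ts
/-! ### Context swapping, freshness -/

def ctxSwap (y z : Nat) (Γ : Multiset Fm) : Multiset Fm := Γ.map (Fm.swap y z)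

@[simp] lemma ctxSwap_zero (y z : Nat) : ctxSwap y z 0 = 0 := rfl

@[simp] lemma ctxSwap_cons (y z : Nat) (A : Fm) (Γ : Multiset Fm) :
    ctxSwap y z (A ::ₘ Γ) = A.swap y z ::ₘ ctxSwap y z Γ := Multiset.map_cons _ _ _

lemma ctxSwap_invol (y z : Nat) (Γ : Multiset Fm) : ctxSwap y z (ctxSwap y z Γ) = Γ := by
  simp [ctxSwap, Multiset.map_map, Function.comp_def, Fm.swap_invol]

lemma FreshIn.swap {y z w : Nat} {Γ : Multiset Fm} (h : FreshIn w Γ) :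
    FreshIn (swapN y z w) (ctxSwap y z Γ) := by
  intro B hB
  obtain ⟨B', hB', rfl⟩ := Multiset.mem_map.1 hB
  exact notmem_fv_swap (h B' hB')

lemma ctxSwap_fresh {y z : Nat} {Γ : Multiset Fm} (hy : FreshIn y Γ) (hz : FreshIn z Γ) :
    ctxSwap y z Γ = Γ := by
  have : ∀ B ∈ Γ, Fm.swap y z B = B := fun B hB => Fm.swap_fresh (hy B hB) (hz B hB)
  simpa [ctxSwap] using Multiset.map_congr rfl this

/-- Free variables of a context. -/
def ctxFv (Γ : Multiset Fm) : Finset Nat := (Γ.map Fm.fv).sup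

lemma freshIn_of_notmem_ctxFv {y : Nat} {Γ : Multiset Fm} (h : y ∉ ctxFv Γ) : FreshIn y Γ := by
  intro B hB hyB
  have hle : Fm.fv B ≤ ctxFv Γ := Multiset.le_sup (Multiset.mem_map_of_mem _ hB)
  exact h (Finset.mem_of_subset hle hyB)

lemma exists_fresh (Γ : Multiset Fm) (s : Finset Nat) :
    ∃ y, y ∉ s ∧ FreshIn y Γ := by
  obtain ⟨y, hy⟩ := Infinite.exists_notMem_finset (s ∪ ctxFv Γ)
  simp only [Finset.mem_union, not_or] at hy
  exact ⟨y, hy.1, freshIn_of_notmem_ctxFv hy.2⟩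

/-! ### Equivariance of LE -/

theorem LE.swap {Γ : Multiset Fm} {C : Fm} (h : LE Γ C) (y z : Nat) :
    LE (ctxSwap y z Γ) (C.swap y z) := by
  induction h with
  | init p ts Γ => simpa [Fm.swap] using LE.init p (ts.map (Tm.swap y z)) (ctxSwap y z Γ)
  | botL Γ A => simpa [Fm.swap] using LE.botL (ctxSwap y z Γ) (A.swap y z)
  | cut _ _ ih1 ih2 => exact LE.cut ih1 (by simpa using ih2)
  | wk A _ ih => exact LE.wk _ (by simpa [Fm.swap] using ih)
  | andL _ ih => simpa [Fm.swap] using LE.andL (by simpa using ih)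
  | andR _ _ ih1 ih2 => exact LE.andR ih1 ih2
  | oriL _ _ ih1 ih2 => simpa [Fm.swap] using LE.oriL (by simpa using ih1) (by simpa using ih2)
  | oriR1 B _ ih => exact LE.oriR1 _ ih
  | oriR2 A _ ih => exact LE.oriR2 _ ih
  | impiL _ _ ih1 ih2 =>
      simpa [Fm.swap] using LE.impiL (by simpa [Fm.swap] using ih1) (by simpa using ih2)
  | impiR _ ih => exact LE.impiR (by simpa using ih)
  | negL _ ih => simpa [Fm.swap] using LE.negL (by simpa [Fm.swap] using ih)
  | negR _ ih => exact LE.negR (by simpa [Fm.swap] using ih)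
  | allL w _ ih =>
      simp only [ctxSwap_cons, Fm.swap, Fm.swap_inst] at ih ⊢
      exact LE.allL (swapN y z w) ih
  | allR w hw hfr _ ih =>
      exact LE.allR (swapN y z w) (notmem_fv_swap hw) hfr.swap (by simpa [Fm.swap_inst] using ih)
  | exiL w hw hfr hwC _ ih =>
      simp only [ctxSwap_cons, Fm.swap]
      exact LE.exiL (swapN y z w) (notmem_fv_swap hw) hfr.swap (notmem_fv_swap hwC)
        (by simpa [Fm.swap_inst] using ih)
  | exiR w _ ih => exact LE.exiR (swapN y z w) (by simpa [Fm.swap_inst] using ih)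
  | orcR _ ih => exact LE.orcR (by simpa [Fm.swap] using ih)
  | impcR _ ih => exact LE.impcR (by simpa [Fm.swap] using ih)
  | excR _ ih => exact LE.excR (by simpa [Fm.swap] using ih)
  | Rc _ ih => exact LE.Rc (by simpa [Fm.swap] using ih)
  | orcL _ _ ih1 ih2 =>
      simpa [Fm.swap] using LE.orcL (by simpa [Fm.swap] using ih1) (by simpa [Fm.swap] using ih2)
  | impcL _ _ ih1 ih2 =>
      simpa [Fm.swap] using LE.impcL (by simpa [Fm.swap] using ih1) (by simpa [Fm.swap] using ih2)
  | excL w hw hfr _ ih =>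
      simp only [ctxSwap_cons, Fm.swap]
      exact LE.excL (swapN y z w) (notmem_fv_swap hw) hfr.swap
        (by simpa [Fm.swap, Fm.swap_inst] using ih)
  | Lc _ ih => simpa [Fm.swap] using LE.Lc (by simpa [Fm.swap] using ih)
/-! ### Size and the identity lemma -/

def Fm.size : Fm → Nat
  | .ati _ _ => 1
  | .atc _ _ => 1
  | .bot => 1
  | .neg A => A.size + 1
  | .and A B => A.size + B.size + 1
  | .ori A B => A.size + B.size + 1
  | .orc A B => A.size + B.size + 1
  | .impi A B => A.size + B.size + 1
  | .impc A B => A.size + B.size + 1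
  | .all A => A.size + 1
  | .exi A => A.size + 1
  | .exc A => A.size + 1

lemma Fm.size_openF (A : Fm) : ∀ k y, (A.openF k y).size = A.size := by
  induction A <;> intro k y <;> simp [Fm.openF, Fm.size, *]

@[simp] lemma Fm.size_inst (A : Fm) (y : Nat) : (A.inst y).size = A.size :=
  A.size_openF 0 y

/-- Exchange (contexts are multisets). -/
lemma LE.exch {A B : Fm} {Γ : Multiset Fm} {C : Fm} (h : LE (A ::ₘ B ::ₘ Γ) C) :
    LE (B ::ₘ A ::ₘ Γ) C := by rwa [Multiset.cons_swap] at h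

lemma cons_rot3 (a b c : Fm) (Γ : Multiset Fm) :
    a ::ₘ b ::ₘ c ::ₘ Γ = c ::ₘ a ::ₘ b ::ₘ Γ := by
  rw [Multiset.cons_swap b c, Multiset.cons_swap a c]

/-- Identity: `A, Γ ⊢ A` for every formula `A`. -/
theorem LE.ident : ∀ (A : Fm) (Γ : Multiset Fm), LE (A ::ₘ Γ) A := by
  have key : ∀ n (A : Fm), A.size ≤ n → ∀ Γ, LE (A ::ₘ Γ) A := by
    intro n
    induction n with
    | zero => intro A hA; cases A <;> simp [Fm.size] at hA
    | succ n ih =>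
      intro A hA Γ
      cases A with
      | ati p ts => exact LE.init p ts Γ
      | atc p ts =>
        exact LE.Rc (LE.exch (LE.Lc (LE.exch (LE.negL (LE.exch (LE.init p ts _))))))
      | bot => exact LE.botL Γ _
      | neg A =>
        refine LE.negR (LE.exch (LE.negL (LE.exch ?_)))
        exact ih A (by simp [Fm.size] at hA; omega) _
      | and A B =>
        simp [Fm.size] at hA
        exact LE.andL (LE.andR (ih A (by omega) _) (LE.exch (ih B (by omega) _)))
      | ori A B =>
        simp [Fm.size] at hA
        exact LE.oriL (LE.oriR1 B (ih A (by omega) _)) (LE.oriR2 A (ih B (by omega) _))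
      | impi A B =>
        simp [Fm.size] at hA
        refine LE.impiR (LE.exch (LE.impiL (LE.exch (ih A (by omega) _)) ?_))
        exact ih B (by omega) _
      | impc A B =>
        simp [Fm.size] at hA
        refine LE.impcR ?_
        rw [cons_rot3]
        refine LE.impcL (LE.exch (ih A (by omega) _)) ?_
        rw [cons_rot3]
        exact LE.negL (LE.exch (ih B (by omega) _))
      | all A =>
        simp [Fm.size] at hA
        obtain ⟨y, hy, hfr⟩ := exists_fresh (Fm.all A ::ₘ Γ) A.fv
        refine LE.allR y hy hfr (LE.allL y ?_)
        exact ih (A.inst y) (by simp; omega) _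
      | exi A =>
        simp [Fm.size] at hA
        obtain ⟨y, hy, hfr⟩ := exists_fresh (Fm.exi A ::ₘ Γ) A.fv
        refine LE.exiL y hy (fun B hB => hfr B (Multiset.mem_cons_of_mem hB)) (hfr _ (Multiset.mem_cons_self _ _)) ?_
        exact LE.exiR y (ih (A.inst y) (by simp; omega) _)
      | exc A =>
        simp [Fm.size] at hA
        refine LE.excR ?_
        rw [Multiset.cons_swap]
        obtain ⟨y, hy, hfr⟩ := exists_fresh (Fm.all (Fm.neg A) ::ₘ Γ) A.fv
        refine LE.excL y hy (fun B hB => hfr B hB) ?_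
        rw [Multiset.cons_swap]
        have hne : (Fm.neg A).inst y = Fm.neg (A.inst y) := rfl
        refine LE.allL y ?_
        rw [hne]
        refine LE.negL ?_
        rw [cons_rot3]
        exact ih (A.inst y) (by simp; omega) _
      | orc A B =>
        simp [Fm.size] at hA
        refine LE.orcR ?_
        rw [cons_rot3]
        refine LE.orcL ?_ ?_
        · refine LE.exch (LE.negL (LE.exch (ih A (by omega) _)))
        · rw [cons_rot3]
          exact LE.negL (LE.exch (ih B (by omega) _))
  exact fun A Γ => key A.size A le_rfl Γ
/-! ### Weakening -/

@[simp] lemma swapN_left (y z : Nat) : swapN y z y = z := by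
  unfold swapN; split_ifs <;> omega

theorem LE.weak {Γ : Multiset Fm} {C : Fm} (h : LE Γ C) : ∀ D, LE (D ::ₘ Γ) C := by
  induction h with
  | init p ts Γ => exact fun D => LE.exch (LE.init p ts (D ::ₘ Γ))
  | botL Γ A => exact fun D => LE.exch (LE.botL (D ::ₘ Γ) A)
  | cut _ _ ih1 ih2 => exact fun D => LE.cut (ih1 D) (LE.exch (ih2 D))
  | wk A _ ih => exact fun D => LE.wk A (ih D)
  | andL _ ih => exact fun D => LE.exch (LE.andL (by rw [cons_rot3]; exact ih D))
  | andR _ _ ih1 ih2 => exact fun D => LE.andR (ih1 D) (ih2 D)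
  | oriL _ _ ih1 ih2 =>
      exact fun D => LE.exch (LE.oriL (LE.exch (ih1 D)) (LE.exch (ih2 D)))
  | oriR1 B _ ih => exact fun D => LE.oriR1 B (ih D)
  | oriR2 A _ ih => exact fun D => LE.oriR2 A (ih D)
  | impiL _ _ ih1 ih2 =>
      exact fun D => LE.exch (LE.impiL (LE.exch (ih1 D)) (LE.exch (ih2 D)))
  | impiR _ ih => exact fun D => LE.impiR (LE.exch (ih D))
  | negL _ ih => exact fun D => LE.exch (LE.negL (LE.exch (ih D)))
  | negR _ ih => exact fun D => LE.negR (LE.exch (ih D))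
  | allL y _ ih => exact fun D => LE.exch (LE.allL y (by rw [cons_rot3]; exact ih D))
  | allR y hy hfr _ ih =>
      rename_i Γ A _
      intro D
      obtain ⟨z, hz, hfrz⟩ := exists_fresh (D ::ₘ Γ) A.fv
      have hfrzΓ : FreshIn z Γ := fun B hB => hfrz B (Multiset.mem_cons_of_mem hB)
      have h2 := (ih (D.swap y z)).swap y z
      rw [ctxSwap_cons, Fm.swap_invol, ctxSwap_fresh hfr hfrzΓ, Fm.swap_inst,
        Fm.swap_fresh hy hz, swapN_left] at h2
      exact LE.allR z hz hfrz h2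
  | exiL y hy hfr hyC _ ih =>
      rename_i Γ A C _
      intro D
      obtain ⟨z, hz', hfrz⟩ := exists_fresh (D ::ₘ Γ) (A.fv ∪ C.fv)
      simp only [Finset.mem_union, not_or] at hz'
      have hfrzΓ : FreshIn z Γ := fun B hB => hfrz B (Multiset.mem_cons_of_mem hB)
      have h2 := (ih (D.swap y z)).swap y z
      rw [ctxSwap_cons, ctxSwap_cons, Fm.swap_invol, ctxSwap_fresh hfr hfrzΓ, Fm.swap_inst,
        Fm.swap_fresh hy hz'.1, swapN_left, Fm.swap_fresh hyC hz'.2] at h2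
      exact LE.exch (LE.exiL z hz'.1 hfrz hz'.2 (LE.exch h2))
  | exiR y _ ih => exact fun D => LE.exiR y (ih D)
  | orcR _ ih => exact fun D => LE.orcR (by rw [cons_rot3]; exact ih D)
  | impcR _ ih => exact fun D => LE.impcR (by rw [cons_rot3]; exact ih D)
  | excR _ ih => exact fun D => LE.excR (LE.exch (ih D))
  | Rc _ ih => exact fun D => LE.Rc (LE.exch (ih D))
  | orcL _ _ ih1 ih2 =>
      exact fun D => LE.exch (LE.orcL (LE.exch (ih1 D)) (LE.exch (ih2 D)))
  | impcL _ _ ih1 ih2 =>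
      exact fun D => LE.exch (LE.impcL (LE.exch (ih1 D)) (LE.exch (ih2 D)))
  | excL y hy hfr _ ih =>
      rename_i Γ A _
      intro D
      obtain ⟨z, hz, hfrz⟩ := exists_fresh (D ::ₘ Γ) A.fv
      have hfrzΓ : FreshIn z Γ := fun B hB => hfrz B (Multiset.mem_cons_of_mem hB)
      have h2 := (ih (D.swap y z)).swap y z
      rw [ctxSwap_cons, ctxSwap_cons, Fm.swap_invol, ctxSwap_fresh hfr hfrzΓ, Fm.swap_inst,
        Fm.swap_fresh hy hz, swapN_left] at h2
      have hbot : Fm.bot.swap y z = Fm.bot := rfl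
      rw [hbot] at h2
      exact LE.exch (LE.excL z hz hfrz (LE.exch h2))
  | Lc _ ih => exact fun D => LE.exch (LE.Lc (LE.exch (ih D)))
/-! ### Extraction for eventually externally classical formulas -/

lemma IsEEC.openF {A : Fm} (h : IsEEC A) : ∀ k y, IsEEC (A.openF k y) := by
  induction h with
  | ec h => intro k y; cases h <;> simp only [Fm.openF] <;> exact .ec (by constructor)
  | and _ _ ih1 ih2 => intro k y; exact .and (ih1 k y) (ih2 k y)
  | all _ ih => intro k y; exact .all (ih (k+1) y)
  | impi A _ ih => intro k y; exact .impi _ (ih k y)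
  | neg A => intro k y; exact .neg _

lemma IsEEC.inst {A : Fm} (h : IsEEC A) (y : Nat) : IsEEC (A.inst y) := h.openF 0 y

theorem eec_extract : ∀ (A : Fm), IsEEC A → ∀ (Γ : Multiset Fm),
    LE (Fm.neg A ::ₘ Γ) Fm.bot → LE Γ A := by
  have key : ∀ n (A : Fm), A.size ≤ n → IsEEC A → ∀ Γ,
      LE (Fm.neg A ::ₘ Γ) Fm.bot → LE Γ A := by
    intro n
    induction n with
    | zero => intro A hA; cases A <;> simp [Fm.size] at hA
    | succ n ih =>
      intro A hsz hA Γ H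
      cases hA with
      | ec hc =>
        cases hc with
        | atc p ts =>
          refine LE.Rc (LE.cut ?_ (LE.exch (H.weak _)))
          refine LE.negR (LE.Lc (LE.exch (LE.negL (LE.exch (LE.init p ts _)))))
        | bot => exact LE.cut (LE.negR (LE.botL Γ _)) H
        | orc A B =>
          refine LE.orcR (LE.cut (A := Fm.neg (Fm.orc A B)) ?_ ?_)
          · refine LE.negR (LE.orcL ?_ ?_)
            · exact LE.exch (LE.negL (LE.exch (LE.ident A _)))
            · rw [cons_rot3]
              exact LE.negL (LE.exch (LE.ident B _))
          · have h2 := (H.weak (Fm.neg B)).weak (Fm.neg A)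
            rwa [cons_rot3] at h2
        | impc A B =>
          refine LE.impcR (LE.cut (A := Fm.neg (Fm.impc A B)) ?_ ?_)
          · refine LE.negR (LE.impcL (LE.exch (LE.ident A _)) ?_)
            rw [cons_rot3]
            exact LE.negL (LE.exch (LE.ident B _))
          · have h2 := (H.weak (Fm.neg B)).weak A
            rwa [cons_rot3] at h2
        | exc A =>
          refine LE.excR (LE.cut ?_ (LE.exch (H.weak _)))
          obtain ⟨y, hy, hfr⟩ := exists_fresh (Fm.all (Fm.neg A) ::ₘ Γ) A.fv
          refine LE.negR (LE.excL y hy hfr ?_)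
          refine LE.exch (LE.allL y ?_)
          have hne : (Fm.neg A).inst y = Fm.neg (A.inst y) := rfl
          rw [hne]
          refine LE.negL ?_
          rw [cons_rot3]
          exact LE.ident _ _
      | and hA hB =>
        rename_i A B
        simp [Fm.size] at hsz
        refine LE.andR (ih A (by omega) hA Γ ?_) (ih B (by omega) hB Γ ?_)
        · refine LE.cut ?_ (LE.exch (H.weak _))
          refine LE.negR (LE.andL ?_)
          rw [cons_rot3]
          exact LE.negL (LE.exch (LE.ident A _))
        · refine LE.cut ?_ (LE.exch (H.weak _))
          refine LE.negR (LE.andL ?_)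
          rw [cons_rot3]
          refine LE.negL ?_
          rw [cons_rot3]
          exact LE.ident B _
      | all hA =>
        rename_i A
        simp [Fm.size] at hsz
        obtain ⟨y, hy, hfr⟩ := exists_fresh Γ A.fv
        refine LE.allR y hy hfr (ih (A.inst y) (by simp; omega) (hA.inst y) Γ ?_)
        refine LE.cut ?_ (LE.exch (H.weak _))
        refine LE.negR (LE.allL y ?_)
        rw [cons_rot3]
        exact LE.negL (LE.exch (LE.ident _ _))
      | impi A hB =>
        rename_i B
        simp [Fm.size] at hsz
        refine LE.impiR (ih B (by omega) hB _ ?_)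
        refine LE.cut (A := Fm.neg (Fm.impi A B)) ?_ ?_
        · refine LE.negR (LE.impiL ?_ (LE.exch (LE.negL (LE.exch (LE.ident B _)))))
          rw [cons_rot3]
          exact LE.ident A _
        · have h2 := (H.weak A).weak (Fm.neg B)
          rwa [cons_rot3] at h2
      | neg A =>
        refine LE.negR (LE.cut ?_ (LE.exch (H.weak _)))
        exact LE.negR (LE.negL (LE.exch (LE.ident A _)))
  exact fun A hA Γ H => key A.size A le_rfl hA Γ H
/-- For every finite multiset Γ (given by a list `L`) and eventually
    externally classical A, `⊢_LE ⋀Γ →c A` iff `⊢_LE ⋀Γ →i A`. -/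
theorem LE_classical_right_eec (L : List Fm) (A : Fm) (hA : IsEEC A) :
    LE 0 (Fm.impc (conj L) A) ↔ LE 0 (Fm.impi (conj L) A) := by
  set C := conj L with hC
  constructor
  · intro h
    refine LE.impiR (eec_extract A hA _ ?_)
    refine LE.cut ((h.weak C).weak (Fm.neg A)) ?_
    refine LE.impcL ?_ (LE.exch (LE.negL (LE.exch (LE.ident A _))))
    rw [cons_rot3]
    exact LE.ident C _
  · intro h
    refine LE.impcR (LE.cut ((h.weak (Fm.neg A)).weak C) ?_)
    refine LE.impiL (LE.exch (LE.ident C _)) ?_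
    rw [cons_rot3]
    exact LE.negL (LE.exch (LE.ident A _))

end Ecumenical
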